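/- Fix the exponential utility u(w) = (1 − e^{−rw})/r with r ≠ 0 and an arbitrary quasiprobability parameter q ∈ ℝ. For any density matrix ρ on ℂ^{d_S} and any unitary U on ℂ^{d_S}, the expected utility equals ⟨u(w)⟩_{ρ,U} = (1/r)(1 − Tr(U ρ̃ U† e^{r H_S})), where ρ̃ = (1/2)(e^{−rq H_S} ρ e^{−r(1−q) H_S} + e^{−r(1−q) H_S} ρ e^{−rq H_S}). -/

import Mathlib

open Matrix BigOperators Finset Kronecker
open scoped ComplexOrder

noncomputable section

namespace Daemonic

/-- The outer product `|x⟩⟨y|` as a matrix. -/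
def ketbra {ι : Type*} [Fintype ι] (x y : ι → ℂ) : Matrix ι ι ℂ :=
  Matrix.vecMulVec x (star y)

/-- A family of vectors is orthonormal. -/
def ONFam {ι κ : Type*} [Fintype ι] [DecidableEq κ] (v : κ → ι → ℂ) : Prop :=
  ∀ i j, star (v i) ⬝ᵥ v j = if i = j then 1 else 0

/-- A density matrix: positive semidefinite with unit trace. -/
def IsDensity {ι : Type*} [Fintype ι] (ρ : Matrix ι ι ℂ) : Prop :=
  ρ.PosSemidef ∧ ρ.trace = 1

/-- The matrix element `⟨x|M|y⟩`. -/
def matElem {ι : Type*} [Fintype ι] (M : Matrix ι ι ℂ) (x y : ι → ℂ) : ℂ :=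
  star x ⬝ᵥ (M *ᵥ y)

/-- The Hamiltonian `H_S = ∑ₖ εₖ |εₖ⟩⟨εₖ|`. -/
def ham {n : ℕ} (ε : Fin n → ℝ) (v : Fin n → Fin n → ℂ) : Matrix (Fin n) (Fin n) ℂ :=
  ∑ k, (ε k : ℂ) • ketbra (v k) (v k)

/-- `e^{t H_S} = ∑ₖ e^{t εₖ} |εₖ⟩⟨εₖ|` (functional calculus in the eigenbasis of `H_S`). -/
def expHam {n : ℕ} (ε : Fin n → ℝ) (v : Fin n → Fin n → ℂ) (t : ℝ) :
    Matrix (Fin n) (Fin n) ℂ :=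
  ∑ k, (Real.exp (t * ε k) : ℂ) • ketbra (v k) (v k)

/-- The expected utility `⟨u(w)⟩_{ρ,U}` for quasiprobability parameter `q`,
with respect to the eigenvalues `ε` and orthonormal eigenvectors `v` of `H_S`. -/
def expUtil {n : ℕ} (u : ℝ → ℝ) (q : ℝ) (ε : Fin n → ℝ) (v : Fin n → Fin n → ℂ)
    (ρ U : Matrix (Fin n) (Fin n) ℂ) : ℝ :=
  ∑ i, ∑ j, ∑ k,
    (matElem ρ (v i) (v j) * matElem Uᴴ (v j) (v k) * matElem U (v k) (v i)).re *
      u (q * ε i + (1 - q) * ε j - ε k)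

/-- The optimal expected utility `𝓤(ρ) = max over unitaries U of ⟨u(w)⟩_{ρ,U}`. -/
def optUtil {n : ℕ} (u : ℝ → ℝ) (q : ℝ) (ε : Fin n → ℝ) (v : Fin n → Fin n → ℂ)
    (ρ : Matrix (Fin n) (Fin n) ℂ) : ℝ :=
  ⨆ U : Matrix.unitaryGroup (Fin n) ℂ, expUtil u q ε v ρ (U : Matrix (Fin n) (Fin n) ℂ)

/-- The exponential utility `u(w) = (1 - e^{-r w})/r`. -/
def expUtility (r : ℝ) : ℝ → ℝ := fun w => (1 - Real.exp (-r * w)) / r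

/-- The partial trace over the ancilla. -/
def ptraceA {dS dA : ℕ} (ρSA : Matrix (Fin dS × Fin dA) (Fin dS × Fin dA) ℂ) :
    Matrix (Fin dS) (Fin dS) ℂ :=
  Matrix.of fun i j => ∑ a, ρSA (i, a) (j, a)

/-- The unnormalized conditional state `Tr_A((I ⊗ Π_a) ρ_SA (I ⊗ Π_a))`, where
`Π_a = |a⟩⟨a|` projects onto the vector `w a` of an orthonormal basis `w` of the ancilla. -/
def condUnnorm {dS dA : ℕ} (w : Fin dA → Fin dA → ℂ)
    (ρSA : Matrix (Fin dS × Fin dA) (Fin dS × Fin dA) ℂ) (a : Fin dA) :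
    Matrix (Fin dS) (Fin dS) ℂ :=
  Matrix.of fun i j => ∑ c, ∑ d, ρSA (i, c) (j, d) * (w a d * star (w a c))

/-- The outcome probability `p_a = Tr((I ⊗ Π_a) ρ_SA)`. -/
def prob {dS dA : ℕ} (w : Fin dA → Fin dA → ℂ)
    (ρSA : Matrix (Fin dS × Fin dA) (Fin dS × Fin dA) ℂ) (a : Fin dA) : ℝ :=
  ((condUnnorm w ρSA a).trace).re

/-- The conditional state `ρ_{S|a}`. -/
def condState {dS dA : ℕ} (w : Fin dA → Fin dA → ℂ)
    (ρSA : Matrix (Fin dS × Fin dA) (Fin dS × Fin dA) ℂ) (a : Fin dA) :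
    Matrix (Fin dS) (Fin dS) ℂ :=
  ((prob w ρSA a : ℂ))⁻¹ • condUnnorm w ρSA a

/-- The daemonic expected utility `𝓤_{{Π_a}}(ρ_SA) = ∑_a p_a 𝓤(ρ_{S|a})`. -/
def daemonicUtil {dS dA : ℕ} (u : ℝ → ℝ) (q : ℝ) (ε : Fin dS → ℝ)
    (v : Fin dS → Fin dS → ℂ) (w : Fin dA → Fin dA → ℂ)
    (ρSA : Matrix (Fin dS × Fin dA) (Fin dS × Fin dA) ℂ) : ℝ :=
  ∑ a, prob w ρSA a * optUtil u q ε v (condState w ρSA a)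

/-- The maximum daemonic gain `δ𝓤(ρ_SA)`, maximizing over all orthonormal bases of the
ancilla (equivalently, over the rows of all unitary matrices). -/
def daemonicGain {dS dA : ℕ} (u : ℝ → ℝ) (q : ℝ) (ε : Fin dS → ℝ)
    (v : Fin dS → Fin dS → ℂ)
    (ρSA : Matrix (Fin dS × Fin dA) (Fin dS × Fin dA) ℂ) : ℝ :=
  (⨆ V : Matrix.unitaryGroup (Fin dA) ℂ,
      daemonicUtil u q ε v (fun a => (V : Matrix (Fin dA) (Fin dA) ℂ) a) ρSA) -
    optUtil u q ε v (ptraceA ρSA)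

/-- The ergotropy of a (possibly unnormalized) state `σ` with respect to a Hamiltonian `H`:
`ℰ_H(σ) = max over unitaries U of (Tr(Hσ) - Tr(H U σ U†))`. -/
def ergotropyH {n : ℕ} (H σ : Matrix (Fin n) (Fin n) ℂ) : ℝ :=
  ⨆ U : Matrix.unitaryGroup (Fin n) ℂ,
    ((H * σ).trace -
      (H * ((U : Matrix (Fin n) (Fin n) ℂ) * σ * (U : Matrix (Fin n) (Fin n) ℂ)ᴴ)).trace).re

/-- A separable bipartite state: a convex combination of product states. -/
def IsSeparable {dS dA : ℕ} (ρSA : Matrix (Fin dS × Fin dA) (Fin dS × Fin dA) ℂ) : Prop :=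
  ∃ (m : ℕ) (p : Fin m → ℝ) (σ : Fin m → Matrix (Fin dS) (Fin dS) ℂ)
    (τ : Fin m → Matrix (Fin dA) (Fin dA) ℂ),
    (∀ k, 0 ≤ p k) ∧ (∑ k, p k = 1) ∧ (∀ k, IsDensity (σ k)) ∧ (∀ k, IsDensity (τ k)) ∧
    ρSA = ∑ k, (p k : ℂ) • (σ k ⊗ₖ τ k)

/-- A classical-quantum state `ρ_SA = ∑ₖ pₖ Pₖ ⊗ ρᴬₖ` with `Pₖ` mutually orthogonal
rank-one projectors summing to the identity. -/
def IsClassicalQuantum {dS dA : ℕ}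
    (ρSA : Matrix (Fin dS × Fin dA) (Fin dS × Fin dA) ℂ) : Prop :=
  ∃ (p : Fin dS → ℝ) (ψ : Fin dS → Fin dS → ℂ) (τ : Fin dS → Matrix (Fin dA) (Fin dA) ℂ),
    (∀ k, 0 ≤ p k) ∧ (∑ k, p k = 1) ∧ ONFam ψ ∧ (∀ k, IsDensity (τ k)) ∧
    ρSA = ∑ k, (p k : ℂ) • (ketbra (ψ k) (ψ k) ⊗ₖ τ k)

/-- The dephasing map associated with an orthonormal basis `v`. -/
def dephase {n : ℕ} (v : Fin n → Fin n → ℂ) (ρ : Matrix (Fin n) (Fin n) ℂ) :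
    Matrix (Fin n) (Fin n) ℂ :=
  ∑ k, ketbra (v k) (v k) * ρ * ketbra (v k) (v k)


section Helpers

lemma matElem_ketbra {ι : Type*} [Fintype ι] (a b x y : ι → ℂ) :
    matElem (ketbra a b) x y = (star x ⬝ᵥ a) * (star b ⬝ᵥ y) := by
  simp only [matElem, ketbra, Matrix.mulVec, dotProduct, vecMulVec_apply,
    Finset.sum_mul, Finset.mul_sum, Pi.star_apply]
  rw [Finset.sum_comm]
  exact Finset.sum_congr rfl fun j _ => Finset.sum_congr rfl fun i _ => by ring

lemma ketbra_mulVec {ι : Type*} [Fintype ι] (a b y : ι → ℂ) :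
    ketbra a b *ᵥ y = (star b ⬝ᵥ y) • a := by
  ext i
  simp [ketbra, Matrix.mulVec, dotProduct, vecMulVec_apply, Finset.sum_mul,
    Finset.mul_sum, mul_comm, mul_left_comm]

lemma matElem_sandwich {ι : Type*} [Fintype ι] (A B : Matrix ι ι ℂ) (a b x y : ι → ℂ) :
    matElem (A * ketbra a b * B) x y = matElem A x a * matElem B b y := by
  simp only [matElem, ← Matrix.mulVec_mulVec, ketbra_mulVec, Matrix.mulVec_smul,
    dotProduct_smul, smul_eq_mul]
  ring

variable {n : ℕ} (v : Fin n → Fin n → ℂ)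

lemma completeness (hv : ONFam v) :
    ∑ k, ketbra (v k) (v k) = (1 : Matrix (Fin n) (Fin n) ℂ) := by
  have h1 : (Matrix.of fun x k => v k x)ᴴ * (Matrix.of fun x k => v k x) = 1 := by
    ext i j
    simpa [Matrix.mul_apply, Matrix.one_apply, dotProduct] using hv i j
  have h2 := mul_eq_one_comm.mp h1
  ext x y
  simpa [Matrix.mul_apply, ketbra, vecMulVec_apply, Matrix.sum_apply] using
    congrFun (congrFun h2 x) y

lemma matElem_add {ι : Type*} [Fintype ι] (A B : Matrix ι ι ℂ) (x y : ι → ℂ) :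
    matElem (A + B) x y = matElem A x y + matElem B x y := by
  simp [matElem, Matrix.add_mulVec, dotProduct_add]

lemma matElem_sum {ι κ : Type*} [Fintype ι] (s : Finset κ) (M : κ → Matrix ι ι ℂ)
    (x y : ι → ℂ) : matElem (∑ k ∈ s, M k) x y = ∑ k ∈ s, matElem (M k) x y := by
  classical
  induction s using Finset.induction with
  | empty => simp [matElem, Matrix.mulVec, dotProduct]
  | insert _ _ h ih =>
      rw [Finset.sum_insert h, Finset.sum_insert h, matElem_add, ih]

lemma matElem_smul {ι : Type*} [Fintype ι] (c : ℂ) (M : Matrix ι ι ℂ)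
    (x y : ι → ℂ) : matElem (c • M) x y = c * matElem M x y := by
  simp only [matElem, Matrix.mulVec, dotProduct, Matrix.smul_apply,
    Finset.mul_sum, smul_eq_mul]
  exact Finset.sum_congr rfl fun i _ => Finset.sum_congr rfl fun j _ => by ring

lemma matElem_mul_basis (hv : ONFam v) (A B : Matrix (Fin n) (Fin n) ℂ) (x y : Fin n → ℂ) :
    matElem (A * B) x y = ∑ k, matElem A x (v k) * matElem B (v k) y := by
  have h : A * B = ∑ k, A * ketbra (v k) (v k) * B := by
    rw [← Finset.sum_mul, ← Finset.mul_sum, completeness v hv, Matrix.mul_one]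
  rw [h, matElem_sum]
  exact Finset.sum_congr rfl fun k _ => matElem_sandwich A B (v k) (v k) x y

lemma trace_mul_ketbra (M : Matrix (Fin n) (Fin n) ℂ) (a b : Fin n → ℂ) :
    (M * ketbra a b).trace = matElem M b a := by
  simp only [Matrix.trace, Matrix.diag, Matrix.mul_apply, ketbra, vecMulVec_apply,
    matElem, dotProduct, Matrix.mulVec, Pi.star_apply, Finset.mul_sum]
  exact Finset.sum_congr rfl fun i _ => Finset.sum_congr rfl fun j _ => by ring

lemma trace_basis (hv : ONFam v) (M : Matrix (Fin n) (Fin n) ℂ) :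
    M.trace = ∑ k, matElem M (v k) (v k) := by
  conv_lhs => rw [← Matrix.mul_one M, ← completeness v hv]
  rw [Finset.mul_sum, Matrix.trace_sum]
  exact Finset.sum_congr rfl fun k _ => trace_mul_ketbra M (v k) (v k)

lemma matElem_conjT (M : Matrix (Fin n) (Fin n) ℂ) (x y : Fin n → ℂ) :
    matElem Mᴴ x y = starRingEnd ℂ (matElem M y x) := by
  simp only [matElem, dotProduct, Matrix.mulVec, Matrix.conjTranspose_apply,
    Pi.star_apply, map_sum, _root_.map_mul, Finset.mul_sum]
  rw [Finset.sum_comm]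
  exact Finset.sum_congr rfl fun i _ => Finset.sum_congr rfl fun j _ => by
    simp [RCLike.star_def]; ring

lemma matElem_one (hv : ONFam v) (i j : Fin n) :
    matElem (1 : Matrix (Fin n) (Fin n) ℂ) (v i) (v j) = if i = j then 1 else 0 := by
  simpa [matElem] using hv i j

lemma matElem_expHam (hv : ONFam v) (ε : Fin n → ℝ) (t : ℝ) (i j : Fin n) :
    matElem (expHam ε v t) (v i) (v j) =
      if i = j then (Real.exp (t * ε i) : ℂ) else 0 := by
  rw [expHam, matElem_sum]
  have h : ∀ k, matElem ((Real.exp (t * ε k) : ℂ) • ketbra (v k) (v k)) (v i) (v j)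
      = if k = i then (if i = j then ((Real.exp (t * ε i) : ℂ)) else 0) else 0 := by
    intro k
    rw [matElem_smul, matElem_ketbra, hv, hv]
    by_cases h1 : i = k
    · subst h1
      by_cases h2 : i = j <;> simp [h2]
    · have h1' : ¬ (k = i) := fun hh => h1 hh.symm
      simp [h1, h1']
  rw [Finset.sum_congr rfl fun k _ => h k, Finset.sum_ite_eq' Finset.univ i]
  simp

lemma matElem_expHam_mul (hv : ONFam v) (ε : Fin n → ℝ) (t : ℝ)
    (A : Matrix (Fin n) (Fin n) ℂ) (i : Fin n) (y : Fin n → ℂ) :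
    matElem (expHam ε v t * A) (v i) y
      = (Real.exp (t * ε i) : ℂ) * matElem A (v i) y := by
  rw [matElem_mul_basis v hv]
  simp only [matElem_expHam v hv, ite_mul, zero_mul]
  rw [Finset.sum_ite_eq Finset.univ i]
  simp

lemma matElem_mul_expHam (hv : ONFam v) (ε : Fin n → ℝ) (t : ℝ)
    (A : Matrix (Fin n) (Fin n) ℂ) (x : Fin n → ℂ) (j : Fin n) :
    matElem (A * expHam ε v t) x (v j)
      = matElem A x (v j) * (Real.exp (t * ε j) : ℂ) := by
  rw [matElem_mul_basis v hv]
  have h : ∀ k, matElem A x (v k) * matElem (expHam ε v t) (v k) (v j)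
      = if k = j then matElem A x (v j) * (Real.exp (t * ε j) : ℂ) else 0 := by
    intro k
    rw [matElem_expHam v hv]
    by_cases hkj : k = j
    · subst hkj; simp
    · simp [hkj]
  rw [Finset.sum_congr rfl fun k _ => h k, Finset.sum_ite_eq' Finset.univ j]
  simp

lemma swap3 {M : Type*} [AddCommMonoid M] (F : Fin n → Fin n → Fin n → M) :
    ∑ i, ∑ j, ∑ k, F i j k = ∑ k, ∑ i, ∑ j, F i j k := by
  have h1 : ∀ i : Fin n, ∑ j, ∑ k, F i j k = ∑ k, ∑ j, F i j k :=
    fun i => Finset.sum_comm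
  simp only [h1]
  exact Finset.sum_comm

end Helpers

/-- for the exponential utility with `r ≠ 0` and arbitrary `q`, the expected
utility equals `(1/r)(1 - Tr(U ρ̃ U† e^{r H_S}))`, where
`ρ̃ = (e^{-rqH_S} ρ e^{-r(1-q)H_S} + e^{-r(1-q)H_S} ρ e^{-rqH_S})/2`. -/
theorem stmt16 {dS : ℕ} (r : ℝ) (hr : r ≠ 0) (q : ℝ)
    (ε : Fin dS → ℝ) (hε : StrictMono ε)
    (v : Fin dS → Fin dS → ℂ) (hv : ONFam v)
    (ρ : Matrix (Fin dS) (Fin dS) ℂ) (hρ : IsDensity ρ)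
    (U : Matrix (Fin dS) (Fin dS) ℂ) (hU : U ∈ Matrix.unitaryGroup (Fin dS) ℂ) :
    ((expUtil (expUtility r) q ε v ρ U : ℝ) : ℂ) =
      ((1/r : ℝ) : ℂ) *
        (1 - (U * ((1/2 : ℂ) • (expHam ε v (-(r * q)) * ρ * expHam ε v (-(r * (1 - q))) +
            expHam ε v (-(r * (1 - q))) * ρ * expHam ε v (-(r * q)))) * Uᴴ *
          expHam ε v r).trace) := by
  classical
  obtain ⟨hpsd, htr⟩ := hρ
  have hherm : ρᴴ = ρ := hpsd.1
  have hU1 : Uᴴ * U = 1 := by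
    have h := (Unitary.mem_iff.mp hU).1
    simpa [Matrix.star_eq_conjTranspose] using h
  set e : Fin dS → ℝ := fun i => Real.exp (-(r * q) * ε i) with he
  set f : Fin dS → ℝ := fun i => Real.exp (-(r * (1 - q)) * ε i) with hf
  set g : Fin dS → ℝ := fun i => Real.exp (r * ε i) with hg
  set z : Fin dS → Fin dS → Fin dS → ℂ := fun i j k =>
    matElem ρ (v i) (v j) * matElem Uᴴ (v j) (v k) * matElem U (v k) (v i) with hz
  set ρt : Matrix (Fin dS) (Fin dS) ℂ :=
    (1/2 : ℂ) • (expHam ε v (-(r * q)) * ρ * expHam ε v (-(r * (1 - q))) +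
      expHam ε v (-(r * (1 - q))) * ρ * expHam ε v (-(r * q))) with hρt
  -- utility values
  have hu : ∀ i j k : Fin dS, expUtility r (q * ε i + (1 - q) * ε j - ε k)
      = (1 - e i * f j * g k) / r := by
    intro i j k
    have harg : -r * (q * ε i + (1 - q) * ε j - ε k)
        = (-(r * q) * ε i) + ((-(r * (1 - q)) * ε j) + r * ε k) := by ring
    simp only [expUtility, harg, Real.exp_add, he, hf, hg]
    ring
  -- the delta from unitarity
  have hS1 : ∑ i, ∑ j, ∑ k, (z i j k).re = 1 := by
    have hsum : ∑ i, ∑ j, ∑ k, z i j k = 1 := by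
      have hjk : ∀ i j : Fin dS, ∑ k, z i j k
          = matElem ρ (v i) (v j) * (if j = i then (1 : ℂ) else 0) := by
        intro i j
        calc ∑ k, z i j k
            = matElem ρ (v i) (v j) *
                ∑ k, matElem Uᴴ (v j) (v k) * matElem U (v k) (v i) := by
              rw [Finset.mul_sum]
              exact Finset.sum_congr rfl fun k _ => by rw [hz]; ring
          _ = matElem ρ (v i) (v j) * matElem (Uᴴ * U) (v j) (v i) := by
              rw [matElem_mul_basis v hv]
          _ = _ := by rw [hU1, matElem_one v hv]
      simp only [hjk, mul_ite, mul_one, mul_zero]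
      rw [Finset.sum_congr rfl fun i _ =>
        Finset.sum_ite_eq' Finset.univ i (fun j => matElem ρ (v i) (v j))]
      simp only [Finset.mem_univ, if_true]
      rw [← trace_basis v hv, htr]
    calc ∑ i, ∑ j, ∑ k, (z i j k).re = (∑ i, ∑ j, ∑ k, z i j k).re := by
          simp [Complex.re_sum]
      _ = 1 := by rw [hsum, Complex.one_re]
  -- expUtil in closed form
  have hexp : expUtil (expUtility r) q ε v ρ U
      = (1 - ∑ i, ∑ j, ∑ k, (z i j k).re * (e i * f j * g k)) / r := by
    unfold expUtil
    simp only [hu]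
    have hterm : ∀ i j k : Fin dS,
        (matElem ρ (v i) (v j) * matElem Uᴴ (v j) (v k) * matElem U (v k) (v i)).re *
          ((1 - e i * f j * g k) / r)
        = ((z i j k).re - (z i j k).re * (e i * f j * g k)) / r := by
      intro i j k; rw [hz]; ring
    simp only [hterm]
    rw [eq_div_iff hr]
    simp only [Finset.sum_mul, div_mul_cancel₀ _ hr, Finset.sum_sub_distrib]
    rw [hS1]
  -- matrix elements of the symmetrized state
  have hrt : ∀ i j : Fin dS, matElem ρt (v i) (v j)
      = (1/2 : ℂ) * ((e i : ℂ) * (f j : ℂ) + (f i : ℂ) * (e j : ℂ)) *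
          matElem ρ (v i) (v j) := by
    intro i j
    rw [hρt, matElem_smul, matElem_add,
      mul_assoc (expHam ε v (-(r * q))) ρ (expHam ε v (-(r * (1 - q)))),
      mul_assoc (expHam ε v (-(r * (1 - q)))) ρ (expHam ε v (-(r * q))),
      matElem_expHam_mul v hv, matElem_expHam_mul v hv,
      matElem_mul_expHam v hv, matElem_mul_expHam v hv]
    simp only [he, hf]
    ring
  -- the trace as a triple sum
  have htrace : (U * ρt * Uᴴ * expHam ε v r).trace
      = ∑ k, ∑ i, ∑ j, z i j k *
          ((1/2 : ℂ) * ((e i : ℂ) * (f j : ℂ) + (f i : ℂ) * (e j : ℂ)) * (g k : ℂ)) := by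
    rw [trace_basis v hv]
    refine Finset.sum_congr rfl fun k _ => ?_
    rw [matElem_mul_expHam v hv, mul_assoc U ρt Uᴴ, matElem_mul_basis v hv,
      Finset.sum_mul]
    refine Finset.sum_congr rfl fun i _ => ?_
    rw [matElem_mul_basis v hv, Finset.mul_sum, Finset.sum_mul]
    refine Finset.sum_congr rfl fun j _ => ?_
    rw [hrt i j]
    simp only [hz, he, hf, hg]
    ring
  have htrace' : (U * ρt * Uᴴ * expHam ε v r).trace
      = ∑ i, ∑ j, ∑ k, z i j k *
          ((1/2 : ℂ) * ((e i : ℂ) * (f j : ℂ) + (f i : ℂ) * (e j : ℂ)) * (g k : ℂ)) :=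
    htrace.trans (swap3 _).symm
  -- conjugation symmetry
  have hconj : ∀ i j k : Fin dS, (starRingEnd ℂ) (z i j k) = z j i k := by
    intro i j k
    simp only [hz, _root_.map_mul]
    rw [show (starRingEnd ℂ) (matElem ρ (v i) (v j)) = matElem ρᴴ (v j) (v i) from
        (matElem_conjT ρ (v j) (v i)).symm,
      show (starRingEnd ℂ) (matElem Uᴴ (v j) (v k)) = matElem Uᴴᴴ (v k) (v j) from
        (matElem_conjT Uᴴ (v k) (v j)).symm,
      show (starRingEnd ℂ) (matElem U (v k) (v i)) = matElem Uᴴ (v i) (v k) from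
        (matElem_conjT U (v i) (v k)).symm,
      hherm, Matrix.conjTranspose_conjTranspose]
    ring
  have hre : ∀ w : ℂ, ((w.re : ℝ) : ℂ) = (w + (starRingEnd ℂ) w) / 2 := by
    intro w
    rw [Complex.add_conj]
    push_cast
    ring
  -- the real weighted sum equals the complex trace sum
  have hS2 : ((∑ i, ∑ j, ∑ k, (z i j k).re * (e i * f j * g k) : ℝ) : ℂ)
      = ∑ i, ∑ j, ∑ k, z i j k *
          ((1/2 : ℂ) * ((e i : ℂ) * (f j : ℂ) + (f i : ℂ) * (e j : ℂ)) * (g k : ℂ)) := by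
    push_cast
    have hterm : ∀ i j k : Fin dS,
        (((z i j k).re : ℝ) : ℂ) * ((e i : ℂ) * (f j : ℂ) * (g k : ℂ))
        = z i j k * ((1/2 : ℂ) * ((e i : ℂ) * (f j : ℂ)) * (g k : ℂ)) +
          z j i k * ((1/2 : ℂ) * ((e i : ℂ) * (f j : ℂ)) * (g k : ℂ)) := by
      intro i j k
      rw [hre, hconj]
      ring
    calc ∑ i, ∑ j, ∑ k, (((z i j k).re : ℝ) : ℂ) * ((e i : ℂ) * (f j : ℂ) * (g k : ℂ))
        = (∑ i, ∑ j, ∑ k, z i j k * ((1/2 : ℂ) * ((e i : ℂ) * (f j : ℂ)) * (g k : ℂ))) +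
          ∑ i, ∑ j, ∑ k, z j i k * ((1/2 : ℂ) * ((e i : ℂ) * (f j : ℂ)) * (g k : ℂ)) := by
          simp only [hterm, Finset.sum_add_distrib]
      _ = (∑ i, ∑ j, ∑ k, z i j k * ((1/2 : ℂ) * ((e i : ℂ) * (f j : ℂ)) * (g k : ℂ))) +
          ∑ i, ∑ j, ∑ k, z i j k * ((1/2 : ℂ) * ((e j : ℂ) * (f i : ℂ)) * (g k : ℂ)) := by
          congr 1
          exact Finset.sum_comm
      _ = _ := by
          rw [← Finset.sum_add_distrib]
          refine Finset.sum_congr rfl fun i _ => ?_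
          rw [← Finset.sum_add_distrib]
          refine Finset.sum_congr rfl fun j _ => ?_
          rw [← Finset.sum_add_distrib]
          exact Finset.sum_congr rfl fun k _ => by ring
  -- assemble
  rw [hexp]
  rw [show (U * ρt * Uᴴ * expHam ε v r).trace
      = ((∑ i, ∑ j, ∑ k, (z i j k).re * (e i * f j * g k) : ℝ) : ℂ) from
      htrace'.trans hS2.symm]
  push_cast
  ring
end Daemonic
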